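/- Any periodic solution of the Kepler-Heisenberg system has zero energy: if γ is a T-periodic solution (T > 0) of Hamilton's equations for H, then H(γ) = 0. -/

import Mathlib

open Real

/-- The Kepler-Heisenberg Hamiltonian H = K + U on phase space coordinates. -/
noncomputable def Ham (x y z px py pz : ℝ) : ℝ :=
  (1/2) * ((px - y/2 * pz)^2 + (py + x/2 * pz)^2)
    - 1 / (8 * Real.pi * Real.sqrt ((x^2 + y^2)^2 + 16 * z^2))

/-- A solution of Hamilton's equations q̇ = ∂H/∂p, ṗ = -∂H/∂q for the
Kepler-Heisenberg Hamiltonian, avoiding the singular set (x,y,z) = 0. -/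
def IsSolution (x y z px py pz : ℝ → ℝ) : Prop :=
  (∀ t : ℝ, ¬ (x t = 0 ∧ y t = 0 ∧ z t = 0)) ∧
  ∀ t : ℝ,
    HasDerivAt x (deriv (fun s => Ham (x t) (y t) (z t) s (py t) (pz t)) (px t)) t ∧
    HasDerivAt y (deriv (fun s => Ham (x t) (y t) (z t) (px t) s (pz t)) (py t)) t ∧
    HasDerivAt z (deriv (fun s => Ham (x t) (y t) (z t) (px t) (py t) s) (pz t)) t ∧
    HasDerivAt px (-(deriv (fun s => Ham s (y t) (z t) (px t) (py t) (pz t)) (x t))) t ∧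
    HasDerivAt py (-(deriv (fun s => Ham (x t) s (z t) (px t) (py t) (pz t)) (y t))) t ∧
    HasDerivAt pz (-(deriv (fun s => Ham (x t) (y t) s (px t) (py t) (pz t)) (z t))) t

lemma r_pos {x y z : ℝ} (h : ¬ (x = 0 ∧ y = 0 ∧ z = 0)) :
    0 < (x^2 + y^2)^2 + 16 * z^2 := by
  rcases lt_or_eq_of_le (by positivity : (0:ℝ) ≤ (x^2+y^2)^2 + 16*z^2) with h1 | h1
  · exact h1
  · exfalso
    apply h
    have hq : x^2 + y^2 = 0 := by nlinarith [sq_nonneg (x^2+y^2), sq_nonneg z]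
    have hx2 : x^2 = 0 := by nlinarith [sq_nonneg x, sq_nonneg y]
    have hy2 : y^2 = 0 := by nlinarith [sq_nonneg x, sq_nonneg y]
    have hz2 : z^2 = 0 := by nlinarith [sq_nonneg (x^2+y^2)]
    exact ⟨pow_eq_zero_iff (n := 2) (by norm_num) |>.mp hx2,
      pow_eq_zero_iff (n := 2) (by norm_num) |>.mp hy2,
      pow_eq_zero_iff (n := 2) (by norm_num) |>.mp hz2⟩

-- momenta partials
lemma dpx (X Y Z PX PY PZ : ℝ) :
    HasDerivAt (fun s => Ham X Y Z s PY PZ) (PX - Y/2*PZ) PX := by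
  have h := ((((hasDerivAt_id PX).sub_const (Y/2*PZ)).pow 2).add_const
      ((PY + X/2*PZ)^2)).const_mul (1/2) |>.sub_const
      (1 / (8 * Real.pi * Real.sqrt ((X^2 + Y^2)^2 + 16 * Z^2)))
  simp only [Ham]
  refine h.congr_deriv ?_
  simp only [id_eq]
  push_cast
  ring

lemma dpy (X Y Z PX PY PZ : ℝ) :
    HasDerivAt (fun s => Ham X Y Z PX s PZ) (PY + X/2*PZ) PY := by
  have h := ((((hasDerivAt_id PY).add_const (X/2*PZ)).pow 2).const_add
      ((PX - Y/2*PZ)^2)).const_mul (1/2) |>.sub_const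
      (1 / (8 * Real.pi * Real.sqrt ((X^2 + Y^2)^2 + 16 * Z^2)))
  simp only [Ham]
  refine h.congr_deriv ?_
  simp only [id_eq]
  push_cast
  ring

lemma dpz (X Y Z PX PY PZ : ℝ) :
    HasDerivAt (fun s => Ham X Y Z PX PY s)
      (-(Y/2)*(PX - Y/2*PZ) + (X/2)*(PY + X/2*PZ)) PZ := by
  have h1 : HasDerivAt (fun s : ℝ => PX - Y/2*s) (-(Y/2)) PZ := by
    have := ((hasDerivAt_id PZ).const_mul (Y/2)).const_sub PX
    simpa using this
  have h2 : HasDerivAt (fun s : ℝ => PY + X/2*s) (X/2) PZ := by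
    have := ((hasDerivAt_id PZ).const_mul (X/2)).const_add PY
    simpa using this
  have h := ((h1.pow 2).add (h2.pow 2)).const_mul (1/2) |>.sub_const
      (1 / (8 * Real.pi * Real.sqrt ((X^2 + Y^2)^2 + 16 * Z^2)))
  simp only [Ham]
  refine h.congr_deriv ?_
  push_cast
  ring

lemma dX (X Y Z PX PY PZ : ℝ) (hP : 0 < (X^2+Y^2)^2+16*Z^2) :
    HasDerivAt (fun s => Ham s Y Z PX PY PZ)
      ((PY + X/2*PZ)*(PZ/2)
        + X*(X^2+Y^2)/(4*Real.pi*(Real.sqrt ((X^2+Y^2)^2+16*Z^2))^3)) X := by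
  set S := Real.sqrt ((X^2+Y^2)^2+16*Z^2) with hSdef
  have hS : 0 < S := Real.sqrt_pos.mpr hP
  have hK : HasDerivAt
      (fun s : ℝ => (1/2) * ((PX - Y/2*PZ)^2 + (PY + s/2*PZ)^2))
      ((1/2) * (0 + ↑2 * (PY + X/2*PZ)^(2-1) * (1/2*PZ))) X := by
    have h2 : HasDerivAt (fun s : ℝ => PY + s/2*PZ) (1/2*PZ) X := by
      have := (((hasDerivAt_id X).div_const 2).mul_const PZ).const_add PY
      simpa using this
    exact (((hasDerivAt_const X ((PX - Y/2*PZ)^2)).add (h2.pow 2)).const_mul (1/2))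
  have hr : HasDerivAt (fun s : ℝ => (s^2+Y^2)^2 + 16*Z^2)
      (↑2 * (X^2+Y^2)^(2-1) * (↑2 * X^(2-1))) X := by
    exact ((hasDerivAt_pow 2 X).add_const (Y^2)).pow 2 |>.add_const (16*Z^2)
  have hsq : HasDerivAt (fun s : ℝ => Real.sqrt ((s^2+Y^2)^2 + 16*Z^2))
      (1/(2*S) * (↑2 * (X^2+Y^2)^(2-1) * (↑2 * X^(2-1)))) X := by
    exact (Real.hasDerivAt_sqrt (ne_of_gt hP)).comp X hr
  have hden := hsq.const_mul (8 * Real.pi)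
  have hne : (8 * Real.pi * S) ≠ 0 := by positivity
  have hq := (hasDerivAt_const X (1:ℝ)).div hden hne
  have h := hK.sub hq
  simp only [Ham]
  refine h.congr_deriv ?_
  field_simp
  ring

lemma dY (X Y Z PX PY PZ : ℝ) (hP : 0 < (X^2+Y^2)^2+16*Z^2) :
    HasDerivAt (fun s => Ham X s Z PX PY PZ)
      (-((PX - Y/2*PZ)*(PZ/2))
        + Y*(X^2+Y^2)/(4*Real.pi*(Real.sqrt ((X^2+Y^2)^2+16*Z^2))^3)) Y := by
  set S := Real.sqrt ((X^2+Y^2)^2+16*Z^2) with hSdef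
  have hS : 0 < S := Real.sqrt_pos.mpr hP
  have hK : HasDerivAt
      (fun s : ℝ => (1/2) * ((PX - s/2*PZ)^2 + (PY + X/2*PZ)^2))
      ((1/2) * (↑2 * (PX - Y/2*PZ)^(2-1) * (1/2*PZ * (-1)) + 0)) Y := by
    have h2 : HasDerivAt (fun s : ℝ => PX - s/2*PZ) (1/2*PZ * (-1)) Y := by
      have := ((((hasDerivAt_id Y).div_const 2).mul_const PZ).const_sub PX)
      refine this.congr_deriv ?_
      simp
    exact (((h2.pow 2).add (hasDerivAt_const Y ((PY + X/2*PZ)^2))).const_mul (1/2))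
  have hr : HasDerivAt (fun s : ℝ => (X^2+s^2)^2 + 16*Z^2)
      (↑2 * (X^2+Y^2)^(2-1) * (↑2 * Y^(2-1))) Y := by
    exact ((hasDerivAt_pow 2 Y).const_add (X^2)).pow 2 |>.add_const (16*Z^2)
  have hsq : HasDerivAt (fun s : ℝ => Real.sqrt ((X^2+s^2)^2 + 16*Z^2))
      (1/(2*S) * (↑2 * (X^2+Y^2)^(2-1) * (↑2 * Y^(2-1)))) Y := by
    exact (Real.hasDerivAt_sqrt (ne_of_gt hP)).comp Y hr
  have hden := hsq.const_mul (8 * Real.pi)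
  have hne : (8 * Real.pi * S) ≠ 0 := by positivity
  have hq := (hasDerivAt_const Y (1:ℝ)).div hden hne
  have h := hK.sub hq
  simp only [Ham]
  refine h.congr_deriv ?_
  field_simp
  ring

lemma dZ (X Y Z PX PY PZ : ℝ) (hP : 0 < (X^2+Y^2)^2+16*Z^2) :
    HasDerivAt (fun s => Ham X Y s PX PY PZ)
      (2*Z/(Real.pi*(Real.sqrt ((X^2+Y^2)^2+16*Z^2))^3)) Z := by
  set S := Real.sqrt ((X^2+Y^2)^2+16*Z^2) with hSdef
  have hS : 0 < S := Real.sqrt_pos.mpr hP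
  have hr : HasDerivAt (fun s : ℝ => (X^2+Y^2)^2 + 16*s^2)
      (16 * (↑2 * Z^(2-1))) Z := by
    have := ((hasDerivAt_pow 2 Z).const_mul 16).const_add ((X^2+Y^2)^2)
    exact this
  have hsq : HasDerivAt (fun s : ℝ => Real.sqrt ((X^2+Y^2)^2 + 16*s^2))
      (1/(2*S) * (16 * (↑2 * Z^(2-1)))) Z := by
    exact (Real.hasDerivAt_sqrt (ne_of_gt hP)).comp Z hr
  have hden := hsq.const_mul (8 * Real.pi)
  have hne : (8 * Real.pi * S) ≠ 0 := by positivity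
  have hq := (hasDerivAt_const Z (1:ℝ)).div hden hne
  have h := hq.const_sub ((1/2) * ((PX - Y/2*PZ)^2 + (PY + X/2*PZ)^2))
  simp only [Ham]
  refine h.congr_deriv ?_
  field_simp
  ring

set_option maxHeartbeats 1600000 in
/-- Any periodic solution has zero energy. -/
theorem periodic_implies_zero_energy (x y z px py pz : ℝ → ℝ) (T : ℝ) (hT : 0 < T)
    (h : IsSolution x y z px py pz)
    (hper : ∀ t : ℝ, x (t + T) = x t ∧ y (t + T) = y t ∧ z (t + T) = z t ∧
      px (t + T) = px t ∧ py (t + T) = py t ∧ pz (t + T) = pz t) :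
    ∀ t : ℝ, Ham (x t) (y t) (z t) (px t) (py t) (pz t) = 0 := by
  have hP : ∀ t, 0 < ((x t)^2 + (y t)^2)^2 + 16 * (z t)^2 := fun t => r_pos (h.1 t)
  have hx' : ∀ t, HasDerivAt x (px t - y t/2 * pz t) t := fun t => by
    have := (h.2 t).1
    rwa [(dpx (x t) (y t) (z t) (px t) (py t) (pz t)).deriv] at this
  have hy' : ∀ t, HasDerivAt y (py t + x t/2 * pz t) t := fun t => by
    have := (h.2 t).2.1
    rwa [(dpy (x t) (y t) (z t) (px t) (py t) (pz t)).deriv] at this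
  have hz' : ∀ t, HasDerivAt z
      (-(y t/2)*(px t - y t/2*pz t) + (x t/2)*(py t + x t/2*pz t)) t := fun t => by
    have := (h.2 t).2.2.1
    rwa [(dpz (x t) (y t) (z t) (px t) (py t) (pz t)).deriv] at this
  have hpx' : ∀ t, HasDerivAt px
      (-((py t + x t/2*pz t)*(pz t/2)
        + x t*((x t)^2+(y t)^2)/(4*Real.pi*(Real.sqrt (((x t)^2+(y t)^2)^2+16*(z t)^2))^3))) t :=
    fun t => by
    have := (h.2 t).2.2.2.1
    rwa [(dX (x t) (y t) (z t) (px t) (py t) (pz t) (hP t)).deriv] at this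
  have hpy' : ∀ t, HasDerivAt py
      (-(-((px t - y t/2*pz t)*(pz t/2))
        + y t*((x t)^2+(y t)^2)/(4*Real.pi*(Real.sqrt (((x t)^2+(y t)^2)^2+16*(z t)^2))^3))) t :=
    fun t => by
    have := (h.2 t).2.2.2.2.1
    rwa [(dY (x t) (y t) (z t) (px t) (py t) (pz t) (hP t)).deriv] at this
  have hpz' : ∀ t, HasDerivAt pz
      (-(2*z t/(Real.pi*(Real.sqrt (((x t)^2+(y t)^2)^2+16*(z t)^2))^3))) t := fun t => by
    have := (h.2 t).2.2.2.2.2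
    rwa [(dZ (x t) (y t) (z t) (px t) (py t) (pz t) (hP t)).deriv] at this
  -- energy conservation
  have hH : ∀ t, HasDerivAt (fun u => Ham (x u) (y u) (z u) (px u) (py u) (pz u)) 0 t := by
    intro t
    have hS : 0 < Real.sqrt (((x t)^2+(y t)^2)^2+16*(z t)^2) := Real.sqrt_pos.mpr (hP t)
    have hA := (hpx' t).sub (((hy' t).div_const 2).mul (hpz' t))
    have hB := (hpy' t).add (((hx' t).div_const 2).mul (hpz' t))
    have hK := ((hA.pow 2).add (hB.pow 2)).const_mul (1/2)
    have hr := ((((hx' t).pow 2).add ((hy' t).pow 2)).pow 2).add (((hz' t).pow 2).const_mul 16)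
    have hst := (Real.hasDerivAt_sqrt (ne_of_gt (hP t))).comp t hr
    have hden := hst.const_mul (8*Real.pi)
    have hne : 8*Real.pi*Real.sqrt (((x t)^2+(y t)^2)^2+16*(z t)^2) ≠ 0 := by positivity
    have hq := (hasDerivAt_const t (1:ℝ)).div hden hne
    have hfin := hK.sub hq
    simp only [Ham]
    refine hfin.congr_deriv ?_
    have hπ := Real.pi_ne_zero
    simp only [Pi.add_apply, Pi.sub_apply, Pi.mul_apply, Pi.pow_apply, Function.comp_apply]
    field_simp
    ring
  have hE : ∀ t, Ham (x t) (y t) (z t) (px t) (py t) (pz t)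
      = Ham (x 0) (y 0) (z 0) (px 0) (py 0) (pz 0) :=
    fun t => is_const_of_deriv_eq_zero (fun u => (hH u).differentiableAt)
      (fun u => (hH u).deriv) t 0
  set E := Ham (x 0) (y 0) (z 0) (px 0) (py 0) (pz 0) with hEdef
  clear_value E
  -- virial identity J' = 2H = 2E
  have hJ : ∀ t, HasDerivAt (fun u => x u * px u + y u * py u + 2*(z u * pz u)) (2*E) t := by
    intro t
    have hS : 0 < Real.sqrt (((x t)^2+(y t)^2)^2+16*(z t)^2) := Real.sqrt_pos.mpr (hP t)
    have h2 : (Real.sqrt (((x t)^2+(y t)^2)^2+16*(z t)^2))^2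
        = ((x t)^2+(y t)^2)^2+16*(z t)^2 := Real.sq_sqrt (hP t).le
    have hfin := (((hx' t).mul (hpx' t)).add ((hy' t).mul (hpy' t))).add
      (((hz' t).mul (hpz' t)).const_mul 2)
    refine hfin.congr_deriv ?_
    rw [← hE t]
    simp only [Ham]
    have key : (1:ℝ) / (8 * Real.pi * Real.sqrt (((x t)^2+(y t)^2)^2+16*(z t)^2))
        = (((x t)^2+(y t)^2)^2+16*(z t)^2)
          / (8 * Real.pi * (Real.sqrt (((x t)^2+(y t)^2)^2+16*(z t)^2))^3) := by
      have h3 : (Real.sqrt (((x t)^2+(y t)^2)^2+16*(z t)^2))^3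
          = (((x t)^2+(y t)^2)^2+16*(z t)^2) * Real.sqrt (((x t)^2+(y t)^2)^2+16*(z t)^2) := by
        rw [pow_succ, h2]
      rw [h3]
      have hπ := Real.pi_ne_zero
      have hPne : (((x t)^2+(y t)^2)^2+16*(z t)^2) ≠ 0 := (hP t).ne'
      field_simp
    rw [key]
    have hπ := Real.pi_ne_zero
    field_simp
    ring
  -- conclude E = 0 from periodicity
  have hL : ∀ t, HasDerivAt
      (fun u => x u * px u + y u * py u + 2*(z u * pz u) - 2*E*u) 0 t := by
    intro t
    have h1 : HasDerivAt (fun u : ℝ => 2*E*u) (2*E) t := by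
      simpa using (hasDerivAt_id t).const_mul (2*E)
    have := (hJ t).sub h1
    exact this.congr_deriv (sub_self _)
  have hLconst := is_const_of_deriv_eq_zero (f := fun u => x u * px u + y u * py u
      + 2*(z u * pz u) - 2*E*u) (fun u => (hL u).differentiableAt) (fun u => (hL u).deriv) T 0
  have hxT : x T = x 0 := by have := (hper 0).1; simpa using this
  have hyT : y T = y 0 := by have := (hper 0).2.1; simpa using this
  have hzT : z T = z 0 := by have := (hper 0).2.2.1; simpa using this
  have hpxT : px T = px 0 := by have := (hper 0).2.2.2.1; simpa using this
  have hpyT : py T = py 0 := by have := (hper 0).2.2.2.2.1; simpa using this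
  have hpzT : pz T = pz 0 := by have := (hper 0).2.2.2.2.2; simpa using this
  simp only [hxT, hyT, hzT, hpxT, hpyT, hpzT] at hLconst
  have hE0 : E = 0 := by
    have : 2*E*T = 0 := by linarith [hLconst]
    have hT' : T ≠ 0 := ne_of_gt hT
    rcases mul_eq_zero.mp this with h' | h'
    · rcases mul_eq_zero.mp h' with h'' | h''
      · norm_num at h''
      · exact h''
    · exact absurd h' hT'
  intro t
  rw [hE t, hE0]
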